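/- Let X be a connected simple countable graph with all vertex degrees at most M, let t be a complex number with |t| < 1, and set α(t) = (M + √(M² + 4(|t|+1)M))/2. Then for every m ≥ 0, the bounded operator C_m(t) on ℓ²(VX), defined by (C_m(t)f)(x) = ∑_{C path starting at x, ℓ(C)=m} t^{bc(C)} f(t(C)), satisfies ‖C_m(t)‖ ≤ α(t)^m. -/

import Mathlib

open scoped BigOperators
open SimpleGraph

noncomputable section

namespace BZ

open Classical

variable {V : Type*} (G : SimpleGraph V)

/-- Bump count of a walk: the number of indices `i` with `e_i = ē_{i+1}`. -/
def bc {x y : V} (w : G.Walk x y) : ℕ :=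
  ((w.darts.zip w.darts.tail).filter fun p => p.2 = p.1.symm).length

/-- A closed walk has a tail if `e_m = ē_1` (with `m ≥ 1`). -/
def hasTail {x : V} (w : G.Walk x x) : Prop :=
  1 ≤ w.length ∧ w.darts.getLast? = w.darts.head?.map SimpleGraph.Dart.symm

/-- Cyclic bump count of a closed walk: `cbc = bc + 1` if the walk has a tail, else `bc`. -/
def cbc {x : V} (w : G.Walk x x) : ℕ :=
  bc G w + if hasTail G w then 1 else 0

/-- `C_m(t)(x, y)`: the weighted count `∑ t^{bc(C)}` over walks from `x` to `y` of length `m`. -/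
def Cent (t : ℂ) (m : ℕ) (x y : V) : ℂ :=
  ∑' w : {w : G.Walk x y // w.length = m}, t ^ bc G w.1

/-- `α(t) = (M + √(M² + 4(|t|+1)M))/2`, where `M` bounds the degrees. -/
def alpha (M : ℕ) (t : ℂ) : ℝ :=
  ((M : ℝ) + Real.sqrt ((M : ℝ) ^ 2 + 4 * (‖t‖ + 1) * (M : ℝ))) / 2

/-- The `ℓ²`-space on the vertex set `V`. -/
abbrev L2V (V : Type*) := lp (fun _ : V => ℂ) 2

variable [DecidableEq V]


section Aux

variable {V : Type*} [DecidableEq V] (G : SimpleGraph V) [G.LocallyFinite]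

lemma count_sum_le (M : ℕ) (hM : ∀ v : V, G.degree v ≤ M) :
    ∀ (m : ℕ) (x : V) (s : Finset V),
      ∑ y ∈ s, (G.finsetWalkLength m x y).card ≤ M ^ m := by
  intro m
  induction m with
  | zero =>
    intro x s
    have h : ∀ y : V, (G.finsetWalkLength 0 x y).card = if x = y then 1 else 0 := by
      intro y
      by_cases h : x = y
      · subst h; simp [SimpleGraph.finsetWalkLength]
      · simp [SimpleGraph.finsetWalkLength, h]
    simp only [h, Finset.sum_ite_eq]
    split <;> simp
  | succ n ih =>
    intro x s
    have h : ∀ y : V, (G.finsetWalkLength (n + 1) x y).card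
        ≤ ∑ w : G.neighborSet x, (G.finsetWalkLength n w y).card := by
      intro y
      have hdef : G.finsetWalkLength (n + 1) x y =
          Finset.univ.biUnion fun (w : G.neighborSet x) =>
            (G.finsetWalkLength n w y).map
              ⟨fun p => SimpleGraph.Walk.cons w.property p, fun _ _ h => by injection h⟩ := rfl
      rw [hdef]
      refine le_trans Finset.card_biUnion_le (le_of_eq ?_)
      exact Finset.sum_congr rfl fun w _ => Finset.card_map _
    calc ∑ y ∈ s, (G.finsetWalkLength (n + 1) x y).card
        ≤ ∑ y ∈ s, ∑ w : G.neighborSet x, (G.finsetWalkLength n w y).card :=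
          Finset.sum_le_sum fun y _ => h y
      _ = ∑ w : G.neighborSet x, ∑ y ∈ s, (G.finsetWalkLength n w y).card :=
          Finset.sum_comm
      _ ≤ ∑ _w : G.neighborSet x, M ^ n := Finset.sum_le_sum fun w _ => ih w s
      _ = Fintype.card (G.neighborSet x) * M ^ n := by
          rw [Finset.sum_const, smul_eq_mul, Finset.card_univ]
      _ ≤ M * M ^ n := by
          refine Nat.mul_le_mul_right _ ?_
          rw [G.card_neighborSet_eq_degree]; exact hM x
      _ = M ^ (n + 1) := (pow_succ' M n).symm

lemma card_walk_eq (m : ℕ) (x y : V) :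
    Fintype.card {w : G.Walk x y // w.length = m} = (G.finsetWalkLength m x y).card := by
  rw [← SimpleGraph.card_set_walk_length_eq]
  exact Fintype.card_congr (Equiv.subtypeEquivRight (by simp))

lemma card_rev (m : ℕ) (x y : V) :
    (G.finsetWalkLength m x y).card = (G.finsetWalkLength m y x).card := by
  rw [← card_walk_eq, ← card_walk_eq]
  exact Fintype.card_congr
    ⟨fun w => ⟨w.1.reverse, by simp [w.2]⟩, fun w => ⟨w.1.reverse, by simp [w.2]⟩,
      fun w => Subtype.ext (by simp), fun w => Subtype.ext (by simp)⟩

lemma norm_cent_le {t : ℂ} (ht : ‖t‖ ≤ 1) (m : ℕ) (x y : V) :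
    ‖Cent G t m x y‖ ≤ ((G.finsetWalkLength m x y).card : ℝ) := by
  rw [Cent, tsum_fintype]
  refine le_trans (norm_sum_le _ _) ?_
  calc ∑ w : {w : G.Walk x y // w.length = m}, ‖t ^ bc G w.1‖
      ≤ ∑ _w : {w : G.Walk x y // w.length = m}, (1 : ℝ) := by
        refine Finset.sum_le_sum fun w _ => ?_
        rw [norm_pow]
        exact pow_le_one₀ (norm_nonneg t) ht
    _ = (Fintype.card {w : G.Walk x y // w.length = m} : ℝ) := by simp
    _ = _ := by rw [card_walk_eq]

end Aux

/-- For a connected simple countable graph with degrees bounded by `M` and `|t| < 1`,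
any family of bounded operators `C_m(t)` on `ℓ²(VX)` with matrix entries the weighted
path counts satisfies `‖C_m(t)‖ ≤ α(t)^m`. -/

theorem norm_Cop_le {V : Type*} [DecidableEq V] [Countable V] (G : SimpleGraph V)
    [G.LocallyFinite] (M : ℕ) (hconn : G.Connected) (hM : ∀ v : V, G.degree v ≤ M)
    (t : ℂ) (ht : ‖t‖ < 1)
    (Cop : ℕ → (L2V V →L[ℂ] L2V V))
    (hCop : ∀ (m : ℕ) (x y : V), (Cop m (lp.single 2 y 1)) x = Cent G t m x y)
    (m : ℕ) :
    ‖Cop m‖ ≤ alpha M t ^ m := by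
  set C : ℝ := (M : ℝ) ^ m with hCdef
  have hC0 : 0 ≤ C := by positivity
  have htle : ‖t‖ ≤ 1 := ht.le
  -- row and column bounds
  have hrow : ∀ (x : V) (u : Finset V), ∑ y ∈ u, ‖Cent G t m x y‖ ≤ C := by
    intro x u
    calc ∑ y ∈ u, ‖Cent G t m x y‖
        ≤ ∑ y ∈ u, ((G.finsetWalkLength m x y).card : ℝ) :=
          Finset.sum_le_sum fun y _ => norm_cent_le G htle m x y
      _ = ((∑ y ∈ u, (G.finsetWalkLength m x y).card : ℕ) : ℝ) := by push_cast; ring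
      _ ≤ ((M ^ m : ℕ) : ℝ) := Nat.cast_le.mpr (count_sum_le G M hM m x u)
      _ = C := by push_cast; ring
  have hcol : ∀ (y : V) (u : Finset V), ∑ x ∈ u, ‖Cent G t m x y‖ ≤ C := by
    intro y u
    calc ∑ x ∈ u, ‖Cent G t m x y‖
        ≤ ∑ x ∈ u, ((G.finsetWalkLength m y x).card : ℝ) := by
          refine Finset.sum_le_sum fun x _ => ?_
          rw [← card_rev G m x y]
          exact norm_cent_le G htle m x y
      _ = ((∑ x ∈ u, (G.finsetWalkLength m y x).card : ℕ) : ℝ) := by push_cast; ring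
      _ ≤ ((M ^ m : ℕ) : ℝ) := Nat.cast_le.mpr (count_sum_le G M hM m y u)
      _ = C := by push_cast; ring
  have hcolsum : ∀ y : V, Summable fun x => ‖Cent G t m x y‖ :=
    fun y => summable_of_sum_le (fun x => norm_nonneg _) (hcol y)
  have hcoltsum : ∀ y : V, ∑' x, ‖Cent G t m x y‖ ≤ C :=
    fun y => Summable.tsum_le_of_sum_le (hcolsum y) (hcol y)
  have hpos : 0 < (2 : ENNReal).toReal := by norm_num
  have hrr : ∀ x : ℝ, x ^ (2 : ENNReal).toReal = x ^ 2 := by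
    intro x
    rw [show (2 : ENNReal).toReal = ((2 : ℕ) : ℝ) by norm_num, Real.rpow_natCast]
  -- the key estimate on finitely supported vectors
  have key : ∀ (s : Finset V) (c : V → ℂ),
      ‖Cop m (∑ y ∈ s, lp.single 2 y (c y))‖ ≤ C * ‖∑ y ∈ s, lp.single 2 y (c y)‖ := by
    intro s c
    set g : L2V V := ∑ y ∈ s, lp.single 2 y (c y) with hg
    have hgx : ∀ x : V, (Cop m g) x = ∑ y ∈ s, c y * Cent G t m x y := by
      intro x
      have h1 : Cop m g = ∑ y ∈ s, c y • Cop m (lp.single 2 y 1) := by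
        rw [hg, map_sum]
        refine Finset.sum_congr rfl fun y _ => ?_
        have h2 : lp.single (E := fun _ : V => ℂ) (2 : ENNReal) y (c y) = c y • lp.single (E := fun _ : V => ℂ) 2 y (1 : ℂ) := by
          rw [← lp.single_smul, smul_eq_mul, mul_one]
        rw [h2, map_smul]
      rw [h1, lp.coeFn_sum, Finset.sum_apply]
      refine Finset.sum_congr rfl fun y _ => ?_
      rw [lp.coeFn_smul, Pi.smul_apply, hCop m x y, smul_eq_mul]
    -- norms as sums of squares
    have hgnorm : ‖g‖ ^ 2 = ∑ y ∈ s, ‖c y‖ ^ 2 := by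
      have := lp.norm_sum_single (E := fun _ : V => ℂ) hpos c s
      rw [hrr] at this
      simp only [hrr] at this
      rw [hg]
      exact this
    have hsum2 : Summable fun x : V => ‖(Cop m g) x‖ ^ 2 := by
      have := (lp.memℓp (Cop m g)).summable hpos
      simpa only [hrr] using this
    have hhnorm : ‖Cop m g‖ ^ 2 = ∑' x : V, ‖(Cop m g) x‖ ^ 2 := by
      have := lp.norm_rpow_eq_tsum hpos (Cop m g)
      rw [hrr] at this
      simp only [hrr] at this
      exact this
    -- pointwise Cauchy-Schwarz
    have hpt : ∀ x : V, ‖(Cop m g) x‖ ^ 2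
        ≤ C * ∑ y ∈ s, ‖Cent G t m x y‖ * ‖c y‖ ^ 2 := by
      intro x
      have h1 : ‖(Cop m g) x‖ ≤ ∑ y ∈ s, ‖Cent G t m x y‖ * ‖c y‖ := by
        rw [hgx x]
        refine (norm_sum_le _ _).trans (le_of_eq ?_)
        refine Finset.sum_congr rfl fun y _ => ?_
        rw [norm_mul, mul_comm]
      have h2 : (∑ y ∈ s, ‖Cent G t m x y‖ * ‖c y‖) ^ 2
          ≤ (∑ y ∈ s, ‖Cent G t m x y‖) * (∑ y ∈ s, ‖Cent G t m x y‖ * ‖c y‖ ^ 2) := by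
        have hcs := Finset.sum_mul_sq_le_sq_mul_sq s
          (fun y => Real.sqrt ‖Cent G t m x y‖)
          (fun y => Real.sqrt ‖Cent G t m x y‖ * ‖c y‖)
        have e1 : ∀ y : V, Real.sqrt ‖Cent G t m x y‖ *
            (Real.sqrt ‖Cent G t m x y‖ * ‖c y‖) = ‖Cent G t m x y‖ * ‖c y‖ := by
          intro y
          rw [← mul_assoc, Real.mul_self_sqrt (norm_nonneg _)]
        have e2 : ∀ y : V, Real.sqrt ‖Cent G t m x y‖ ^ 2 = ‖Cent G t m x y‖ :=
          fun y => Real.sq_sqrt (norm_nonneg _)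
        have e3 : ∀ y : V, (Real.sqrt ‖Cent G t m x y‖ * ‖c y‖) ^ 2
            = ‖Cent G t m x y‖ * ‖c y‖ ^ 2 := by
          intro y
          rw [mul_pow, Real.sq_sqrt (norm_nonneg _)]
        simp only [e1, e2, e3] at hcs
        exact hcs
      calc ‖(Cop m g) x‖ ^ 2
          ≤ (∑ y ∈ s, ‖Cent G t m x y‖ * ‖c y‖) ^ 2 :=
            pow_le_pow_left₀ (norm_nonneg _) h1 2
        _ ≤ (∑ y ∈ s, ‖Cent G t m x y‖) * (∑ y ∈ s, ‖Cent G t m x y‖ * ‖c y‖ ^ 2) := h2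
        _ ≤ C * ∑ y ∈ s, ‖Cent G t m x y‖ * ‖c y‖ ^ 2 := by
            refine mul_le_mul_of_nonneg_right (hrow x s) ?_
            refine Finset.sum_nonneg fun y _ => ?_
            positivity
    have hsum3 : Summable fun x : V => C * ∑ y ∈ s, ‖Cent G t m x y‖ * ‖c y‖ ^ 2 := by
      refine Summable.mul_left C ?_
      exact summable_sum fun y _ => (hcolsum y).mul_right _
    have hsq : ‖Cop m g‖ ^ 2 ≤ (C * ‖g‖) ^ 2 := by
      calc ‖Cop m g‖ ^ 2 = ∑' x : V, ‖(Cop m g) x‖ ^ 2 := hhnorm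
        _ ≤ ∑' x : V, C * ∑ y ∈ s, ‖Cent G t m x y‖ * ‖c y‖ ^ 2 :=
            Summable.tsum_le_tsum hpt hsum2 hsum3
        _ = C * ∑' x : V, ∑ y ∈ s, ‖Cent G t m x y‖ * ‖c y‖ ^ 2 := tsum_mul_left
        _ = C * ∑ y ∈ s, ∑' x : V, ‖Cent G t m x y‖ * ‖c y‖ ^ 2 := by
            rw [Summable.tsum_finsetSum fun y _ => (hcolsum y).mul_right _]
        _ = C * ∑ y ∈ s, (∑' x : V, ‖Cent G t m x y‖) * ‖c y‖ ^ 2 := by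
            congr 1
            exact Finset.sum_congr rfl fun y _ => tsum_mul_right
        _ ≤ C * ∑ y ∈ s, C * ‖c y‖ ^ 2 := by
            refine mul_le_mul_of_nonneg_left ?_ hC0
            refine Finset.sum_le_sum fun y _ => ?_
            exact mul_le_mul_of_nonneg_right (hcoltsum y) (by positivity)
        _ = C ^ 2 * ∑ y ∈ s, ‖c y‖ ^ 2 := by rw [← Finset.mul_sum]; ring
        _ = C ^ 2 * ‖g‖ ^ 2 := by rw [hgnorm]
        _ = (C * ‖g‖) ^ 2 := by ring
    have h0 : 0 ≤ C * ‖g‖ := mul_nonneg hC0 (norm_nonneg _)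
    exact (pow_le_pow_iff_left₀ (norm_nonneg _) h0 two_ne_zero).mp hsq
  -- alpha bound
  have halpha : (M : ℝ) ≤ alpha M t := by
    have h1 : Real.sqrt ((M : ℝ) ^ 2) ≤
        Real.sqrt ((M : ℝ) ^ 2 + 4 * (‖t‖ + 1) * (M : ℝ)) := by
      refine Real.sqrt_le_sqrt ?_
      have : (0 : ℝ) ≤ 4 * (‖t‖ + 1) * (M : ℝ) := by positivity
      linarith
    rw [Real.sqrt_sq (Nat.cast_nonneg M)] at h1
    rw [alpha]
    linarith
  have hCC : C ≤ alpha M t ^ m :=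
    pow_le_pow_left₀ (Nat.cast_nonneg M) halpha m
  refine (Cop m).opNorm_le_bound (le_trans hC0 hCC) fun f => ?_
  -- density
  have hmem : ‖Cop m f‖ ≤ C * ‖f‖ := by
    have hclosed : IsClosed {g : L2V V | ‖Cop m g‖ ≤ C * ‖g‖} :=
      isClosed_le ((Cop m).continuous.norm) (continuous_const.mul continuous_norm)
    have hsum := lp.hasSum_single (E := fun _ : V => ℂ)
      (by norm_num : (2 : ENNReal) ≠ ⊤) f
    exact hclosed.mem_of_tendsto hsum
      (Filter.Eventually.of_forall fun s => key s (fun y => f y))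
  calc ‖Cop m f‖ ≤ C * ‖f‖ := hmem
    _ ≤ alpha M t ^ m * ‖f‖ := mul_le_mul_of_nonneg_right hCC (norm_nonneg f)


end BZ
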